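/- In a complete lattice where meet with α distributes over directed suprema, if δ and ε are elements with β ≤ δ, γ ≤ ε, and α ⊓ δ = α ⊓ ε, then β_ω ≤ δ and γ_ω ≤ ε; i.e., β_ω and γ_ω are the least such elements extending β and γ with equal meets with α. -/
import Mathlib

/-- The iterated pair construction: `(iterSeq α β γ n).1 = βₙ` and
`(iterSeq α β γ n).2 = γₙ`, where `β₀ = β`, `γ₀ = γ`,
`β_{n+1} = β ⊔ (α ⊓ γₙ)`, `γ_{n+1} = γ ⊔ (α ⊓ βₙ)`. -/
def iterSeq {L : Type*} [CompleteLattice L] (α β γ : L) : ℕ → L × L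
  | 0 => (β, γ)
  | n + 1 => (β ⊔ (α ⊓ (iterSeq α β γ n).2), γ ⊔ (α ⊓ (iterSeq α β γ n).1))

/-- `β_ω = ⨆ₙ βₙ`. -/
noncomputable def betaOmega {L : Type*} [CompleteLattice L] (α β γ : L) : L :=
  ⨆ n, (iterSeq α β γ n).1

/-- `γ_ω = ⨆ₙ γₙ`. -/
noncomputable def gammaOmega {L : Type*} [CompleteLattice L] (α β γ : L) : L :=
  ⨆ n, (iterSeq α β γ n).2

theorem stmt_3 {L : Type*} [CompleteLattice L] (α β γ δ ε : L)
    (hdist : ∀ f : ℕ → L, Monotone f → α ⊓ (⨆ n, f n) = ⨆ n, α ⊓ f n)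
    (hβδ : β ≤ δ) (hγε : γ ≤ ε) (hδε : α ⊓ δ = α ⊓ ε) :
    betaOmega α β γ ≤ δ ∧ gammaOmega α β γ ≤ ε := by
  have key : ∀ n, (iterSeq α β γ n).1 ≤ δ ∧ (iterSeq α β γ n).2 ≤ ε := by
    intro n
    induction n with
    | zero => exact ⟨hβδ, hγε⟩
    | succ n ih =>
      constructor
      · refine sup_le hβδ ?_
        calc α ⊓ (iterSeq α β γ n).2 ≤ α ⊓ ε := inf_le_inf_left _ ih.2
          _ = α ⊓ δ := hδε.symm
          _ ≤ δ := inf_le_right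
      · refine sup_le hγε ?_
        calc α ⊓ (iterSeq α β γ n).1 ≤ α ⊓ δ := inf_le_inf_left _ ih.1
          _ = α ⊓ ε := hδε
          _ ≤ ε := inf_le_right
  exact ⟨iSup_le fun n => (key n).1, iSup_le fun n => (key n).2⟩
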